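/- Let q be a prime, M a finitely generated free ℤ_q-module, and α an endomorphism of M such that α is an automorphism on M ⊗_{ℤ_q} ℚ_q. Then M/α(M) is finite, and its cardinality equals |det(α | M ⊗_{ℤ_q} ℚ_q)|_q^{−1}, where |·|_q is the q-adic absolute value. -/

import Mathlib

open scoped TensorProduct

lemma padic_card_quot_span (q : ℕ) [Fact q.Prime] (a : ℤ_[q]) (ha : a ≠ 0) :
    Finite (ℤ_[q] ⧸ Ideal.span {a}) ∧
      (Nat.card (ℤ_[q] ⧸ Ideal.span {a}) : ℝ) = ‖a‖⁻¹ := by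
  set n := a.valuation with hn
  have hval : (n : ℤ) = a.valuation := rfl
  have hspan : Ideal.span {a} = Ideal.span {(q : ℤ_[q]) ^ n} := by
    apply Ideal.span_singleton_eq_span_singleton.mpr
    exact (Associated.symm ⟨(PadicInt.unitCoeff ha), by
      rw [mul_comm]; exact (PadicInt.unitCoeff_spec ha).symm⟩)
  have hker : RingHom.ker (PadicInt.toZModPow (p := q) n) = Ideal.span {a} := by
    rw [PadicInt.ker_toZModPow, hspan]
  have hsurj : Function.Surjective (PadicInt.toZModPow (p := q) n) := by
    intro x
    exact ⟨(x.val : ℤ_[q]), by rw [map_natCast, ZMod.natCast_zmod_val]⟩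
  have e : (ℤ_[q] ⧸ Ideal.span {a}) ≃+* ZMod (q ^ n) :=
    (Ideal.quotEquivOfEq hker.symm).trans
      (RingHom.quotientKerEquivOfSurjective hsurj)
  have hfin : Finite (ℤ_[q] ⧸ Ideal.span {a}) := Finite.of_equiv _ e.symm.toEquiv
  refine ⟨hfin, ?_⟩
  have hcard : Nat.card (ℤ_[q] ⧸ Ideal.span {a}) = q ^ n := by
    rw [Nat.card_congr e.toEquiv, Nat.card_zmod]
  rw [hcard, PadicInt.norm_eq_zpow_neg_valuation ha, ← hval]
  push_cast
  rw [← zpow_natCast, ← zpow_neg, neg_neg]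

/-- Let `q` be a prime, `M` a finitely generated free `ℤ_q`-module, and `α` an
endomorphism of `M` inducing an automorphism of `M ⊗_{ℤ_q} ℚ_q`. Then `M/α(M)` is
finite, of cardinality `|det(α | M ⊗ ℚ_q)|_q⁻¹` (where `‖·‖` on `ℚ_[q]` is the
normalized `q`-adic absolute value, with `‖q‖ = q⁻¹`). -/
theorem card_quotient_eq_inv_padic_abs_det (q : ℕ) [Fact q.Prime]
    (M : Type*) [AddCommGroup M] [Module ℤ_[q] M]
    [Module.Free ℤ_[q] M] [Module.Finite ℤ_[q] M]
    (α : M →ₗ[ℤ_[q]] M)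
    (hα : Function.Bijective (α.baseChange ℚ_[q])) :
    Finite (M ⧸ LinearMap.range α) ∧
      (Nat.card (M ⧸ LinearMap.range α) : ℝ) =
        ‖LinearMap.det (α.baseChange ℚ_[q])‖⁻¹ := by
  classical
  set ι := Module.Free.ChooseBasisIndex ℤ_[q] M with hι
  let b : Module.Basis ι ℤ_[q] M := Module.Free.chooseBasis ℤ_[q] M
  -- injectivity of α
  have hj : Function.Injective (fun x : M => (1 : ℚ_[q]) ⊗ₜ[ℤ_[q]] x) := by
    intro x y hxy
    simp only at hxy
    apply b.repr.injective
    ext i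
    have h := congrArg (fun z => (b.baseChange ℚ_[q]).repr z i) hxy
    simp only [Module.Basis.baseChange_repr_tmul, Algebra.smul_def, mul_one,
      PadicInt.algebraMap_apply] at h
    exact Subtype.coe_injective h
  have hinj : Function.Injective α := by
    intro x y hxy
    apply hj
    have : (α.baseChange ℚ_[q]) ((1:ℚ_[q]) ⊗ₜ[ℤ_[q]] x)
        = (α.baseChange ℚ_[q]) ((1:ℚ_[q]) ⊗ₜ[ℤ_[q]] y) := by
      simp only [LinearMap.baseChange_tmul, hxy]
    exact hα.injective this
  set N : Submodule ℤ_[q] M := LinearMap.range α with hN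
  obtain ⟨n, snf⟩ := N.smithNormalForm b
  let e0 : M ≃ₗ[ℤ_[q]] N := LinearEquiv.ofInjective α hinj
  -- n = card ι
  have hcardι : n = Fintype.card ι := by
    have e1 : Fin n ≃ ι := Module.Basis.indexEquiv (snf.bN.map e0.symm) b
    rw [← Fintype.card_fin n, Fintype.card_congr e1]
  have hfbij : Function.Bijective snf.f :=
    (Fintype.bijective_iff_injective_and_card snf.f).mpr
      ⟨snf.f.injective, by rw [Fintype.card_fin, hcardι]⟩
  let fe : Fin n ≃ ι := Equiv.ofBijective snf.f hfbij
  -- each a i ≠ 0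
  have ha : ∀ i, snf.a i ≠ 0 := by
    intro i hi
    apply Module.Basis.ne_zero snf.bN i
    have := snf.snf i
    rw [hi, zero_smul] at this
    exact Subtype.coe_injective this
  -- determinant computation
  let bN' : Module.Basis ι ℤ_[q] N := snf.bN.reindex fe
  have hSdiag : LinearMap.toMatrix bN' snf.bM N.subtype
      = Matrix.diagonal (fun i => snf.a (fe.symm i)) := by
    ext i j
    rw [LinearMap.toMatrix_apply]
    have : (bN' j : M) = snf.a (fe.symm j) • snf.bM j := by
      rw [Module.Basis.reindex_apply]
      rw [show ((snf.bN (fe.symm j) : M)) = snf.a (fe.symm j) • snf.bM (snf.f (fe.symm j))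
        from snf.snf (fe.symm j)]
      congr 2
      exact fe.apply_symm_apply j
    rw [Submodule.coe_subtype, this, map_smul]
    by_cases h : i = j
    · subst h
      simp [Matrix.diagonal_apply]
    · simp [Matrix.diagonal_apply, h, Finsupp.single_apply, Ne.symm h]
  have hcomp : α = N.subtype ∘ₗ (e0 : M →ₗ[ℤ_[q]] N) := by
    ext x
    rfl
  have hdet : LinearMap.det α
      = (∏ i, snf.a (fe.symm i)) * Matrix.det (LinearMap.toMatrix snf.bM bN' (e0 : M →ₗ[ℤ_[q]] N)) := by
    conv_lhs => rw [hcomp]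
    rw [← LinearMap.det_toMatrix snf.bM, LinearMap.toMatrix_comp snf.bM bN' snf.bM,
      Matrix.det_mul, hSdiag, Matrix.det_diagonal]
  have hunit : IsUnit (Matrix.det (LinearMap.toMatrix snf.bM bN' (e0 : M →ₗ[ℤ_[q]] N))) := by
    apply IsUnit.of_mul_eq_one (Matrix.det (LinearMap.toMatrix bN' snf.bM (e0.symm : N →ₗ[ℤ_[q]] M)))
    rw [← Matrix.det_mul, ← LinearMap.toMatrix_comp bN' snf.bM bN']
    have : (e0 : M →ₗ[ℤ_[q]] N) ∘ₗ (e0.symm : N →ₗ[ℤ_[q]] M) = LinearMap.id := by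
      ext x; simp
    rw [this, LinearMap.toMatrix_id, Matrix.det_one]
  -- norm of det
  have hdet0 : LinearMap.det α ≠ 0 := by
    rw [hdet]
    exact mul_ne_zero (Finset.prod_ne_zero_iff.mpr fun i _ => ha _) hunit.ne_zero
  have hnormdet : ‖LinearMap.det α‖ = ∏ i : Fin n, ‖snf.a i‖ := by
    have h1 : ‖∏ i : ι, snf.a (fe.symm i)‖ = ∏ i : ι, ‖snf.a (fe.symm i)‖ := by
      simp only [PadicInt.norm_def]
      rw [show ((∏ i : ι, snf.a (fe.symm i) : ℤ_[q]) : ℚ_[q])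
          = ∏ i : ι, ((snf.a (fe.symm i) : ℤ_[q]) : ℚ_[q]) from
        map_prod (PadicInt.Coe.ringHom) _ _, norm_prod]
    rw [hdet, norm_mul, PadicInt.isUnit_iff.mp hunit, mul_one, h1,
      Equiv.prod_comp fe.symm (fun j => ‖snf.a j‖)]
  -- cardinality via smith normal form
  have hindex : N.toAddSubgroup.index
      = ∏ i : Fin n, (Ideal.span {snf.a i}).toAddSubgroup.index := by
    rw [snf.toAddSubgroup_index_eq_pow_mul_prod,
      show Fintype.card ι - n = 0 by omega, pow_zero, one_mul]
  have hcards : ∀ i : Fin n,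
      ((Ideal.span {snf.a i}).toAddSubgroup.index : ℝ) = ‖snf.a i‖⁻¹ := by
    intro i
    have h2 : (Ideal.span {snf.a i}).toAddSubgroup.index
        = Nat.card (ℤ_[q] ⧸ Ideal.span {snf.a i}) := rfl
    rw [h2]
    exact (padic_card_quot_span q (snf.a i) (ha i)).2
  have hcardq : Nat.card (M ⧸ N) = N.toAddSubgroup.index := rfl
  have hpos : ∀ i : Fin n, (Ideal.span {snf.a i}).toAddSubgroup.index ≠ 0 := by
    intro i h
    have h3 := hcards i
    rw [h] at h3
    simp only [Nat.cast_zero] at h3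
    exact ha i (norm_eq_zero.mp (inv_eq_zero.mp h3.symm))
  have hnezero : Nat.card (M ⧸ N) ≠ 0 := by
    rw [hcardq, hindex]
    exact Finset.prod_ne_zero_iff.mpr fun i _ => hpos i
  have hfin : Finite (M ⧸ N) := Nat.finite_of_card_ne_zero hnezero
  refine ⟨hfin, ?_⟩
  have hbc : ‖LinearMap.det (α.baseChange ℚ_[q])‖ = ‖LinearMap.det α‖ := by
    rw [LinearMap.det_baseChange, PadicInt.algebraMap_apply]
    exact (PadicInt.norm_def).symm
  rw [hbc, hcardq, hindex]
  push_cast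
  rw [Finset.prod_congr rfl (fun i _ => hcards i), Finset.prod_inv_distrib, ← hnormdet]
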